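/- Forward path-sum representation (first identity of equation (12)): Fix B ∈ ℕ^d and s > 0, and let f : {x ∈ ℕ^d : x ≤ B} → ℝ satisfy f(0) = 1/(s + S(0)) and, for every x ≤ B with x ≠ 0, the forward recursion f(x) = Σ_{k : x_k ≥ 1} (λ(x − e_k, k)/(s + S(x)))·f(x − e_k). Then for every x ≤ B, f(x) = (1/(s + S(0))) · Σ_{p ∈ 𝒫(0, x)} ∏_{i=2}^{n(p)} λ(p_{i−1}, ℐ_{i−1}(p)) / (s + S(p_i)), where the sum ranges over all paths p = (p_1, …, p_{n(p)}) from 0 to x. -/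

import Mathlib

/-- `IsPath u v p` : the finite sequence of lattice points `p = (p₁, …, pₙ)` in
`ℕ^d` is a path from `u` to `v`, i.e. `p₁ = u`, `pₙ = v`, and each increment
`p_{i+1} − p_i` is a standard basis vector `eₖ`. -/
def IsPath {d : ℕ} (u v : Fin d → ℕ) (p : List (Fin d → ℕ)) : Prop :=
  p ≠ [] ∧ p.getD 0 0 = u ∧ p.getD (p.length - 1) 0 = v ∧
    ∀ i : ℕ, i + 1 < p.length →
      ∃ k : Fin d, p.getD (i + 1) 0 = p.getD i 0 + Pi.single k 1

namespace Fwd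

lemma getD_dropLast {α : Type*} (l : List α) (i : ℕ) (hi : i < l.length - 1) (z : α) :
    l.dropLast.getD i z = l.getD i z := by
  rw [List.getD_eq_getElem _ _ (by simp; omega), List.getD_eq_getElem _ _ (by omega),
    List.getElem_dropLast]

lemma single_index_inj {d : ℕ} {k k' : Fin d}
    (h : (Pi.single k 1 : Fin d → ℕ) = Pi.single k' 1) :
    k = k' := by
  by_contra hne
  have := congrFun h k
  simp [Pi.single_apply, hne] at this

lemma sum_add_single {d : ℕ} (a : Fin d → ℕ) (k : Fin d) :
    ∑ j, (a + (Pi.single k 1 : Fin d → ℕ)) j = (∑ j, a j) + 1 := by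
  simp only [Pi.add_apply]
  rw [Finset.sum_add_distrib]
  congr 1
  simp [Finset.sum_pi_single]

lemma path_sum_apply {d : ℕ} {u v : Fin d → ℕ} {l : List (Fin d → ℕ)}
    (h : IsPath u v l) : ∀ i, i < l.length → ∑ k, l.getD i 0 k = (∑ k, u k) + i := by
  intro i
  induction i with
  | zero => intro _; rw [h.2.1]; simp
  | succ i ih =>
    intro hi
    obtain ⟨k, hk⟩ := h.2.2.2 i hi
    rw [hk, sum_add_single, ih (by omega)]; omega

lemma path_length {d : ℕ} {x : Fin d → ℕ} {l : List (Fin d → ℕ)}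
    (h : IsPath 0 x l) : l.length = (∑ k, x k) + 1 := by
  have h1 : 1 ≤ l.length := List.length_pos_iff.mpr h.1
  have h2 := path_sum_apply h (l.length - 1) (by omega)
  rw [h.2.2.1] at h2
  simp only [Pi.zero_apply, Finset.sum_const_zero, zero_add] at h2
  omega

lemma path_getD_mono {d : ℕ} {u v : Fin d → ℕ} {l : List (Fin d → ℕ)} (h : IsPath u v l) :
    ∀ j, j < l.length → ∀ i, i ≤ j → l.getD i 0 ≤ l.getD j 0 := by
  intro j
  induction j with
  | zero =>
    intro _ i hi
    have : i = 0 := by omega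
    subst this; exact le_rfl
  | succ j ih =>
    intro hj i hi
    rcases Nat.eq_or_lt_of_le hi with rfl | hlt
    · exact le_rfl
    · obtain ⟨k, hk⟩ := h.2.2.2 j hj
      calc l.getD i 0 ≤ l.getD j 0 := ih (by omega) i (by omega)
        _ ≤ l.getD (j+1) 0 := by rw [hk]; exact le_add_of_nonneg_right zero_le

lemma path_getD_le {d : ℕ} {x : Fin d → ℕ} {l : List (Fin d → ℕ)}
    (h : IsPath 0 x l) {i : ℕ} (hi : i < l.length) : l.getD i 0 ≤ x := by
  have h1 : 1 ≤ l.length := List.length_pos_iff.mpr h.1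
  have := path_getD_mono h (l.length - 1) (by omega) i (by omega)
  rwa [h.2.2.1] at this

lemma path_finite {d : ℕ} (x : Fin d → ℕ) :
    Finite {l : List (Fin d → ℕ) // IsPath 0 x l} := by
  have hfin : Finite {y : Fin d → ℕ // y ≤ x} := (Set.finite_Iic x).to_subtype
  set n := (∑ k, x k) + 1 with hn
  apply Finite.of_injective
    (fun l : {l : List (Fin d → ℕ) // IsPath 0 x l} =>
      (fun i : Fin n => (⟨l.1.getD i 0, path_getD_le l.2 (by rw [path_length l.2]; exact i.isLt)⟩ :
        {y : Fin d → ℕ // y ≤ x})))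
  intro a b hab
  apply Subtype.ext
  apply List.ext_getElem (by rw [path_length a.2, path_length b.2])
  intro i h1 h2
  have hi : i < n := by rw [path_length a.2] at h1; exact h1
  have h3 : a.1.getD i 0 = b.1.getD i 0 := congrArg Subtype.val (congrFun hab ⟨i, hi⟩)
  rwa [List.getD_eq_getElem _ _ h1, List.getD_eq_getElem _ _ h2] at h3

lemma isPath_singleton {d : ℕ} (u : Fin d → ℕ) : IsPath u u [u] :=
  ⟨by simp, rfl, rfl, fun i hi => by simp at hi⟩

lemma path_zero_eq {d : ℕ} {l : List (Fin d → ℕ)} (h : IsPath 0 0 l) : l = [0] := by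
  have hl : l.length = 1 := by rw [path_length h]; simp
  obtain ⟨a, rfl⟩ := List.length_eq_one_iff.mp hl
  have := h.2.1
  simp at this
  rw [this]

lemma sub_add_single {d : ℕ} {x : Fin d → ℕ} {k : Fin d} (hk : 1 ≤ x k) :
    x - Pi.single k 1 + Pi.single k 1 = x := by
  funext j
  rcases eq_or_ne j k with rfl | hne
  · simp [Pi.sub_apply]; omega
  · simp [Pi.sub_apply, Pi.single_apply, hne]

lemma isPath_append {d : ℕ} {y : Fin d → ℕ} {l : List (Fin d → ℕ)}
    (h : IsPath 0 y l) (k : Fin d) :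
    IsPath 0 (y + Pi.single k 1) (l ++ [y + Pi.single k 1]) := by
  obtain ⟨hne, h0, hlast, hstep⟩ := h
  have hlen : 1 ≤ l.length := List.length_pos_iff.mpr hne
  refine ⟨by simp, ?_, ?_, ?_⟩
  · rw [List.getD_append _ _ _ 0 (by omega)]; exact h0
  · have hl : (l ++ [y + Pi.single k 1]).length - 1 = l.length := by simp
    rw [hl, List.getD_append_right _ _ _ _ (le_refl _)]
    simp
  · intro i hi
    have hi' : i + 1 < l.length + 1 := by simpa using hi
    rcases Nat.lt_or_ge (i+1) l.length with h1 | h1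
    · obtain ⟨k', hk'⟩ := hstep i h1
      exact ⟨k', by rw [List.getD_append _ _ _ _ h1, List.getD_append _ _ _ _ (by omega)]; exact hk'⟩
    · have he : i + 1 = l.length := by omega
      refine ⟨k, ?_⟩
      rw [he, List.getD_append_right _ _ _ _ (le_refl _), List.getD_append _ _ _ _ (by omega)]
      simp only [Nat.sub_self, List.getD_cons_zero]
      have hi2 : i = l.length - 1 := by omega
      rw [hi2, hlast]

lemma isPath_dropLast {d : ℕ} {x : Fin d → ℕ} {l : List (Fin d → ℕ)}
    (h : IsPath 0 x l) (hx : x ≠ 0) :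
    ∃ k : Fin d, 1 ≤ x k ∧
      x = l.getD (l.length - 2) 0 + Pi.single k 1 ∧
      l.getD (l.length - 2) 0 = x - Pi.single k 1 ∧
      IsPath 0 (x - Pi.single k 1) l.dropLast := by
  have hs : 1 ≤ ∑ k, x k := by
    rcases Function.ne_iff.mp hx with ⟨k, hk⟩
    simp only [Pi.zero_apply] at hk
    calc 1 ≤ x k := by omega
      _ ≤ ∑ j, x j := Finset.single_le_sum (fun j _ => Nat.zero_le _) (Finset.mem_univ k)
  have hlen : 2 ≤ l.length := by rw [path_length h]; omega
  obtain ⟨k, hk⟩ := h.2.2.2 (l.length - 2) (by omega)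
  have he : l.length - 2 + 1 = l.length - 1 := by omega
  rw [he, h.2.2.1] at hk
  have hxk : 1 ≤ x k := by
    rw [hk]; simp [Pi.add_apply]
  have hsub : l.getD (l.length - 2) 0 = x - Pi.single k 1 := by
    rw [hk]; funext j; simp [Pi.sub_apply]
  refine ⟨k, hxk, hk, hsub, ?_, ?_, ?_, ?_⟩
  · exact List.length_pos_iff.mp (by rw [List.length_dropLast]; omega)
  · rw [getD_dropLast _ _ (by omega), h.2.1]
  · rw [List.length_dropLast, getD_dropLast _ _ (by omega)]
    have : l.length - 1 - 1 = l.length - 2 := by omega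
    rw [this, hsub]
  · intro i hi
    rw [List.length_dropLast] at hi
    obtain ⟨k', hk'⟩ := h.2.2.2 i (by omega)
    exact ⟨k', by rw [getD_dropLast _ _ (by omega), getD_dropLast _ _ (by omega)]; exact hk'⟩

noncomputable def W {d : ℕ} (lam : (Fin d → ℕ) → Fin d → ℝ) (s : ℝ)
    (l : List (Fin d → ℕ)) : ℝ :=
  ∏ i ∈ Finset.range (l.length - 1),
    (∑ k, if l.getD (i + 1) 0 = l.getD i 0 + Pi.single k 1 then
        lam (l.getD i 0) k else 0)
      / (s + ∑ k', lam (l.getD (i + 1) 0) k')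

lemma W_singleton {d : ℕ} (lam : (Fin d → ℕ) → Fin d → ℝ) (s : ℝ) (u : Fin d → ℕ) :
    W lam s [u] = 1 := by simp [W]

lemma W_append {d : ℕ} (lam : (Fin d → ℕ) → Fin d → ℝ) (s : ℝ)
    {y : Fin d → ℕ} {l : List (Fin d → ℕ)} (h : IsPath 0 y l) (k : Fin d) :
    W lam s (l ++ [y + Pi.single k 1]) =
      W lam s l * (lam y k / (s + ∑ k', lam (y + Pi.single k 1) k')) := by
  classical
  have hlen : 1 ≤ l.length := List.length_pos_iff.mpr h.1
  set z := y + Pi.single k 1 with hz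
  unfold W
  have hl1 : (l ++ [z]).length - 1 = (l.length - 1) + 1 := by simp; omega
  rw [hl1, Finset.prod_range_succ]
  have hgl : ∀ i : ℕ, i < l.length → (l ++ [z]).getD i 0 = l.getD i 0 :=
    fun i hi => List.getD_append _ _ _ _ hi
  congr 1
  · apply Finset.prod_congr rfl
    intro i hi
    rw [Finset.mem_range] at hi
    rw [hgl i (by omega), hgl (i+1) (by omega)]
  · have h2 : l.length - 1 + 1 = l.length := by omega
    have hzz : (l ++ [z]).getD (l.length - 1 + 1) 0 = z := by
      rw [h2, List.getD_append_right _ _ _ _ (le_refl _)]; simp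
    have hyy : (l ++ [z]).getD (l.length - 1) 0 = y := by
      rw [hgl _ (by omega), h.2.2.1]
    rw [hzz, hyy]
    congr 1
    have hiff : ∀ k' : Fin d, (z = y + Pi.single k' 1) ↔ k' = k := by
      intro k'
      constructor
      · intro hh
        exact single_index_inj (add_left_cancel (hz ▸ hh.symm))
      · rintro rfl; rfl
    calc (∑ k', if z = y + Pi.single k' 1 then lam y k' else 0)
        = ∑ k', if k' = k then lam y k' else 0 :=
          Finset.sum_congr rfl (fun k' _ => if_congr (hiff k') rfl rfl)
      _ = lam y k := by rw [Finset.sum_ite_eq']; simp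

lemma sigma_ext {d : ℕ} {p : Fin d → Prop} {q : Fin d → List (Fin d → ℕ) → Prop}
    {k1 k2 : Fin d} {l1 l2 : List (Fin d → ℕ)} (hk : k1 = k2) (hl : l1 = l2)
    {h1 : p k1} {h2 : p k2} {h3 : q k1 l1} {h4 : q k2 l2} :
    (⟨⟨k1, h1⟩, ⟨l1, h3⟩⟩ : Σ k : Subtype p, {l // q k.1 l}) = ⟨⟨k2, h2⟩, ⟨l2, h4⟩⟩ := by
  subst hk; subst hl; rfl

lemma last_eq {d : ℕ} {x : Fin d → ℕ} (p : {l : List (Fin d → ℕ) // IsPath 0 x l}) :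
    p.1.dropLast ++ [x] = p.1 := by
  have hnil := p.2.1
  have hlast : p.1.getLast hnil = x := by
    rw [List.getLast_eq_getElem,
      ← List.getD_eq_getElem _ 0 (by have := List.length_pos_iff.mpr hnil; omega)]
    exact p.2.2.2.1
  conv_rhs => rw [← List.dropLast_append_getLast hnil]
  rw [hlast]

lemma step_index_unique {d : ℕ} {x y : Fin d → ℕ} {k k' : Fin d} (hk : 1 ≤ x k)
    (hy : y = x - Pi.single k 1) (h : x = y + Pi.single k' 1) : k' = k := by
  subst hy
  apply single_index_inj
  apply add_left_cancel (a := x - Pi.single k 1)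
  rw [← h, sub_add_single hk]

lemma T_rec {d : ℕ} (lam : (Fin d → ℕ) → Fin d → ℝ) (s : ℝ) (x : Fin d → ℕ) (hx : x ≠ 0) :
    (∑' p : {l : List (Fin d → ℕ) // IsPath 0 x l}, W lam s p.1) =
      ∑ k ∈ Finset.univ.filter (fun k => 1 ≤ x k),
        (lam (x - Pi.single k 1) k / (s + ∑ j, lam x j)) *
          ∑' p : {l : List (Fin d → ℕ) // IsPath 0 (x - Pi.single k 1) l}, W lam s p.1 := by
  classical
  letI : ∀ y : Fin d → ℕ, Fintype {l : List (Fin d → ℕ) // IsPath 0 y l} :=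
    fun y => @Fintype.ofFinite _ (path_finite y)
  haveI : Fintype {k : Fin d // 1 ≤ x k} := Fintype.ofFinite _
  rw [tsum_fintype]
  have key : (∑ p : {l : List (Fin d → ℕ) // IsPath 0 x l}, W lam s p.1) =
      ∑ a ∈ (Finset.univ : Finset {k : Fin d // 1 ≤ x k}).sigma
          (fun k => (Finset.univ :
            Finset {l : List (Fin d → ℕ) // IsPath 0 (x - Pi.single k.1 1) l})),
        (lam (x - Pi.single a.1.1 1) a.1.1 / (s + ∑ j, lam x j)) * W lam s a.2.1 := by
    apply Finset.sum_nbij'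
      (i := fun p => ⟨⟨Classical.choose (isPath_dropLast p.2 hx),
          (Classical.choose_spec (isPath_dropLast p.2 hx)).1⟩,
        ⟨p.1.dropLast, (Classical.choose_spec (isPath_dropLast p.2 hx)).2.2.2⟩⟩)
      (j := fun a => ⟨a.2.1 ++ [x], by
        have h := isPath_append a.2.2 a.1.1
        rwa [sub_add_single a.1.2] at h⟩)
    · intro p _; simp [Finset.mem_sigma]
    · intro a _; simp
    · intro p _
      exact Subtype.ext (last_eq p)
    · rintro ⟨⟨k, hk⟩, ⟨l, hl⟩⟩ _
      dsimp only
      have hxl : IsPath 0 x (l ++ [x]) := by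
        have h := isPath_append hl k
        rwa [sub_add_single hk] at h
      obtain ⟨hk1, hk2, hk3, hk4⟩ := Classical.choose_spec (isPath_dropLast hxl hx)
      have hlen : 1 ≤ l.length := List.length_pos_iff.mpr hl.1
      have hml : (l ++ [x]).length - 2 = l.length - 1 := by
        simp only [List.length_append, List.length_singleton]; omega
      have hgd : (l ++ [x]).getD ((l ++ [x]).length - 2) 0 = x - Pi.single k 1 := by
        rw [hml, List.getD_append _ _ _ _ (by omega)]
        exact hl.2.2.1
      have hkk : Classical.choose (isPath_dropLast hxl hx) = k :=
        step_index_unique hk hgd hk2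
      refine Sigma.ext (Subtype.ext hkk) ?_
      refine (Subtype.heq_iff_coe_eq ?_).mpr (show (l ++ [x]).dropLast = l by simp)
      intro l'
      dsimp only
      rw [hkk]
    · intro p _
      obtain ⟨hk1, hk2, hk3, hk4⟩ := Classical.choose_spec (isPath_dropLast p.2 hx)
      set k := Classical.choose (isPath_dropLast p.2 hx)
      have hW := W_append lam s hk4 k
      rw [sub_add_single hk1, last_eq p] at hW
      rw [hW, mul_comm]
  rw [key, Finset.sum_sigma]
  have hsub := Finset.sum_subtype (p := fun k : Fin d => 1 ≤ x k) (F := inferInstance)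
      (Finset.univ.filter fun k : Fin d => 1 ≤ x k) (fun k => by simp)
      (fun k => ∑ p : {l : List (Fin d → ℕ) // IsPath 0 (x - Pi.single k 1) l},
        (lam (x - Pi.single k 1) k / (s + ∑ j, lam x j)) * W lam s p.1)
  refine Eq.trans ?_ (Eq.trans hsub.symm ?_)
  · exact Finset.sum_congr rfl (fun a _ => Finset.sum_congr rfl (fun b _ => rfl))
  · apply Finset.sum_congr rfl
    intro k _
    rw [tsum_fintype, Finset.mul_sum]

lemma T_zero {d : ℕ} (lam : (Fin d → ℕ) → Fin d → ℝ) (s : ℝ) :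
    (∑' p : {l : List (Fin d → ℕ) // IsPath 0 (0 : Fin d → ℕ) l}, W lam s p.1) = 1 := by
  rw [tsum_eq_single (⟨[0], isPath_singleton 0⟩ :
      {l : List (Fin d → ℕ) // IsPath 0 (0 : Fin d → ℕ) l})
    (fun b' hb' => absurd (Subtype.ext (path_zero_eq b'.2)) hb')]
  exact W_singleton lam s 0

end Fwd


/-- Forward path-sum representation (first identity of equation (12)): a solution
of the forward Laplace-domain recursion satisfies, for every `x ≤ B`,
`f(x) = (1/(s+S(0))) · ∑_{p ∈ 𝒫(0,x)} ∏_{i=2}^{n} λ(p_{i−1}, ℐ_{i−1})/(s+S(p_i))`.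
The rate `λ(p_{i−1}, ℐ_{i−1})` attached to the unique step index is written as
`∑ₖ [p_i = p_{i−1} + eₖ]·λ(p_{i−1},k)`. -/
theorem forward_path_sum
    (d : ℕ) (hd : 1 ≤ d)
    (lam : (Fin d → ℕ) → Fin d → ℝ)
    (hlam : ∀ x k, 0 ≤ lam x k)
    (B : Fin d → ℕ) (s : ℝ) (hs : 0 < s)
    (f : (Fin d → ℕ) → ℝ)
    (hf0 : f 0 = 1 / (s + ∑ k, lam 0 k))
    (hrec : ∀ x : Fin d → ℕ, x ≤ B → x ≠ 0 →
      f x = ∑ k ∈ Finset.univ.filter (fun k => 1 ≤ x k),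
        (lam (x - Pi.single k 1) k / (s + ∑ j, lam x j)) * f (x - Pi.single k 1)) :
    ∀ x : Fin d → ℕ, x ≤ B →
      f x = (1 / (s + ∑ k, lam 0 k)) *
        ∑' p : {l : List (Fin d → ℕ) // IsPath (0 : Fin d → ℕ) x l},
          ∏ i ∈ Finset.range (p.1.length - 1),
            (∑ k, if p.1.getD (i + 1) 0 = p.1.getD i 0 + Pi.single k 1 then
                lam (p.1.getD i 0) k else 0)
              / (s + ∑ k', lam (p.1.getD (i + 1) 0) k') := by
  classical
  suffices H : ∀ (n : ℕ) (x : Fin d → ℕ), x ≤ B → (∑ k, x k) = n →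
      f x = (1 / (s + ∑ k, lam 0 k)) *
        ∑' p : {l : List (Fin d → ℕ) // IsPath (0 : Fin d → ℕ) x l}, Fwd.W lam s p.1 by
    intro x hx
    exact H (∑ k, x k) x hx rfl
  intro n
  induction n using Nat.strong_induction_on with
  | _ n ih =>
    intro x hxB hxn
    by_cases hx0 : x = 0
    · subst hx0
      rw [Fwd.T_zero lam s, mul_one, hf0]
    · have hxs : 1 ≤ ∑ j, x j := by
        rcases Function.ne_iff.mp hx0 with ⟨j, hj⟩
        have h1 : 1 ≤ x j := by
          simpa [Nat.one_le_iff_ne_zero] using hj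
        exact le_trans h1 (Finset.single_le_sum (fun j _ => Nat.zero_le _) (Finset.mem_univ j))
      rw [hrec x hxB hx0, Fwd.T_rec lam s x hx0, Finset.mul_sum]
      apply Finset.sum_congr rfl
      intro k hk
      have hk1 : 1 ≤ x k := (Finset.mem_filter.mp hk).2
      have hle : x - Pi.single k 1 ≤ B := le_trans (fun j => Nat.sub_le _ _) hxB
      have hsum : (∑ j, (x - Pi.single k 1 : Fin d → ℕ) j) = n - 1 := by
        have h2 := Fwd.sum_add_single (x - Pi.single k 1) k
        rw [Fwd.sub_add_single hk1] at h2
        omega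
      have hn1 : n - 1 < n := by omega
      rw [ih (n - 1) hn1 (x - Pi.single k 1) hle hsum]
      ring
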